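/- Let d ≥ 2 and let P ∈ ℂ[[T]] have constant term d−1. Then there exist r₁, ..., r_{d-1} ∈ ℂ such that P − ∑_{i=1}^{d-1} exp(r_i T) is divisible by T^d; moreover the r_i can be taken to be the roots of a monic polynomial of degree d−1 whose coefficients are polynomials in the coefficients of P. -/

import Mathlib

open MvPolynomial Finset Polynomial

noncomputable def EE : ℕ → MvPolynomial ℕ ℂ
  | 0 => 1
  | (m+1) =>
    MvPolynomial.C (((m : ℂ)+1))⁻¹ *
      ∑ i ∈ Finset.range (m+1),
        (-1)^i * EE (m - i) * MvPolynomial.X i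
decreasing_by exact Nat.lt_succ_of_le (Nat.sub_le m i)

lemma EE_zero : EE 0 = 1 := by rw [EE]

lemma EE_succ (m : ℕ) : EE (m+1) = MvPolynomial.C (((m : ℂ)+1))⁻¹ *
      ∑ i ∈ Finset.range (m+1), (-1)^i * EE (m - i) * MvPolynomial.X i := by rw [EE]

lemma newton_eval (N : ℕ) (e p e' p' : ℕ → ℂ) (he0 : e 0 = 1) (he0' : e' 0 = 1)
    (hrec : ∀ m, 1 ≤ m → m ≤ N → (m : ℂ) * e m = (-1)^(m+1) *
      ∑ a ∈ (Finset.HasAntidiagonal.antidiagonal m).filter (fun a => a.1 < m), (-1)^a.1 * e a.1 * p a.2)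
    (hrec' : ∀ m, 1 ≤ m → m ≤ N → (m : ℂ) * e' m = (-1)^(m+1) *
      ∑ a ∈ (Finset.HasAntidiagonal.antidiagonal m).filter (fun a => a.1 < m), (-1)^a.1 * e' a.1 * p' a.2)
    (hee : ∀ m, m ≤ N → e m = e' m) :
    ∀ m, 1 ≤ m → m ≤ N → p m = p' m := by
  intro m
  induction m using Nat.strong_induction_on with
  | _ m IH =>
    intro hm1 hmN
    have h1 := hrec m hm1 hmN
    rw [hee m hmN, hrec' m hm1 hmN] at h1
    have h2 := mul_left_cancel₀ (a := ((-1 : ℂ))^(m+1)) (by simp) h1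
    set T := (Finset.HasAntidiagonal.antidiagonal m).filter (fun a => a.1 < m) with hT
    have h0m : ((0 : ℕ), m) ∈ T := by
      simp [hT, Finset.mem_filter, Finset.HasAntidiagonal.mem_antidiagonal]; omega
    rw [← Finset.sum_erase_add T _ h0m, ← Finset.sum_erase_add T
      (fun a => (-1)^a.1 * e a.1 * p a.2) h0m] at h2
    have hcong : ∀ a ∈ T.erase ((0:ℕ), m),
        (-1:ℂ)^a.1 * e a.1 * p a.2 = (-1)^a.1 * e' a.1 * p' a.2 := by
      intro a ha
      have hne := Finset.ne_of_mem_erase ha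
      have haT := Finset.mem_of_mem_erase ha
      simp only [hT, Finset.mem_filter, Finset.HasAntidiagonal.mem_antidiagonal] at haT
      have ha1 : 0 < a.1 := by
        rcases Nat.eq_zero_or_pos a.1 with h | h
        · exfalso; apply hne
          have : a.2 = m := by omega
          exact Prod.ext h this
        · exact h
      rw [hee a.1 (by omega), IH a.2 (by omega) (by omega) (by omega)]
    rw [Finset.sum_congr rfl hcong] at h2
    have := add_left_cancel h2
    simpa [he0, he0'] using this.symm

lemma reindex_sum (m : ℕ) (hm : 1 ≤ m) (e p : ℕ → ℂ) :
    ∑ i ∈ Finset.range m, (-1:ℂ)^i * e (m - 1 - i) * p (i+1)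
      = (-1)^(m+1) * ∑ a ∈ (Finset.HasAntidiagonal.antidiagonal m).filter (fun a => a.1 < m),
          (-1)^a.1 * e a.1 * p a.2 := by
  rw [Finset.mul_sum]
  refine Finset.sum_nbij' (i := fun i => (m - 1 - i, i + 1)) (j := fun a => a.2 - 1)
    ?_ ?_ ?_ ?_ ?_
  · intro i hi
    simp only [Finset.mem_range] at hi
    simp only [Finset.mem_filter, Finset.HasAntidiagonal.mem_antidiagonal]
    omega
  · intro a ha
    simp only [Finset.mem_filter, Finset.HasAntidiagonal.mem_antidiagonal] at ha
    simp only [Finset.mem_range]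
    omega
  · intro i hi; simp
  · intro a ha
    simp only [Finset.mem_filter, Finset.HasAntidiagonal.mem_antidiagonal] at ha
    have h1 : a.2 - 1 + 1 = a.2 := by omega
    have h2 : m - 1 - (a.2 - 1) = a.1 := by omega
    rw [h1, h2]
  · intro i hi
    simp only [Finset.mem_range] at hi
    have hone : ((-1:ℂ))^(m-1-i) * (-1)^(m-1-i) = 1 := by
      rw [← pow_add]; exact Even.neg_one_pow ⟨m-1-i, rfl⟩
    have hsplit : m + 1 = ((m-1-i) + i) + 2 := by omega
    have hpow : ((-1:ℂ))^(m+1) = (-1)^(m-1-i) * (-1)^i := by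
      rw [hsplit, pow_add, pow_add]; ring_nf
    rw [hpow]
    linear_combination (-((-1:ℂ)^i * e (m-1-i) * p (i+1))) * hone
theorem stmt_9 (d : ℕ) (hd : 2 ≤ d) :
    ∃ q : Fin (d - 1) → MvPolynomial (Fin (d - 1)) ℂ,
      ∀ P : PowerSeries ℂ, PowerSeries.constantCoeff P = (d - 1 : ℂ) →
        ∃ r : Fin (d - 1) → ℂ,
          ((PowerSeries.X : PowerSeries ℂ) ^ d ∣
            P - ∑ i, PowerSeries.rescale (r i) (PowerSeries.exp ℂ)) ∧
          ∃ g : Polynomial ℂ, g.Monic ∧ g.natDegree = d - 1 ∧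
            (∀ k : Fin (d - 1), g.coeff k =
              MvPolynomial.eval
                (fun j : Fin (d - 1) =>
                  (((j : ℕ) + 1).factorial : ℂ) * PowerSeries.coeff ((j : ℕ) + 1) P)
                (q k)) ∧
            ∀ i, g.IsRoot (r i) := by
  obtain ⟨n, rfl⟩ : ∃ n, d = n + 2 := ⟨d - 2, by omega⟩
  have hd1 : n + 2 - 1 = n + 1 := rfl
  set N := n + 1 with hN
  -- the variable-reindexing map
  set f' : ℕ → Fin N := fun i => ⟨min i n, by omega⟩ with hf'
  refine ⟨fun k => MvPolynomial.C ((-1:ℂ)^(N-(k:ℕ))) *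
    MvPolynomial.rename f' (EE (N-(k:ℕ))), ?_⟩
  intro P hP
  -- power sums of P
  set p : ℕ → ℂ := fun m => (m.factorial : ℂ) * PowerSeries.coeff m P with hp
  set G : ℕ → ℂ := fun i => ((min i n + 1).factorial : ℂ) *
    PowerSeries.coeff (min i n + 1) P with hG
  set e : ℕ → ℂ := fun m => MvPolynomial.eval G (EE m) with he
  have he0 : e 0 = 1 := by simp [he, EE_zero]
  have hGp : ∀ i, i < N → G i = p (i+1) := by
    intro i hi
    have hmin : min i n = i := by omega
    simp only [hG, hp, hmin]
  -- recursion for e, p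
  have hrec : ∀ m, 1 ≤ m → m ≤ N → (m : ℂ) * e m = (-1)^(m+1) *
      ∑ a ∈ (Finset.HasAntidiagonal.antidiagonal m).filter (fun a => a.1 < m),
        (-1)^a.1 * e a.1 * p a.2 := by
    intro m hm1 hmN
    obtain ⟨t, rfl⟩ : ∃ t, m = t + 1 := ⟨m - 1, by omega⟩
    have hev : e (t+1) = ((t : ℂ)+1)⁻¹ *
        ∑ i ∈ Finset.range (t+1), (-1:ℂ)^i * e (t - i) * G i := by
      show MvPolynomial.eval G (EE (t+1)) = _
      rw [EE_succ]
      simp only [map_mul, map_sum, map_pow, map_neg, map_one, map_inv₀,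
        MvPolynomial.eval_C, MvPolynomial.eval_X]
      rfl
    have hne : ((t:ℂ) + 1) ≠ 0 := Nat.cast_add_one_ne_zero t
    have hsum : ∑ i ∈ Finset.range (t+1), (-1:ℂ)^i * e (t - i) * G i
        = ∑ i ∈ Finset.range (t+1), (-1:ℂ)^i * e (t + 1 - 1 - i) * p (i+1) := by
      refine Finset.sum_congr rfl fun i hi => ?_
      simp only [Finset.mem_range] at hi
      rw [hGp i (by omega), Nat.add_sub_cancel]
    rw [hev, hsum, reindex_sum (t+1) (by omega) e p, ← mul_assoc]
    first
      | rfl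
      | (have hc : ((t+1 : ℕ) : ℂ) = (t:ℂ)+1 := by push_cast; ring
         rw [hc, mul_inv_cancel₀ hne, one_mul])
  -- the polynomial g
  set g : Polynomial ℂ := Polynomial.X^N + ∑ k ∈ Finset.range N,
    Polynomial.C ((-1:ℂ)^(N-k) * e (N-k)) * Polynomial.X^k with hg
  have hdegs : (∑ k ∈ Finset.range N,
      Polynomial.C ((-1:ℂ)^(N-k) * e (N-k)) * Polynomial.X^k).degree < (N : WithBot ℕ) := by
    refine lt_of_le_of_lt (Polynomial.degree_sum_le _ _) ?_
    rw [Finset.sup_lt_iff (by exact_mod_cast WithBot.bot_lt_coe N)]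
    intro k hk
    simp only [Finset.mem_range] at hk
    refine lt_of_le_of_lt (Polynomial.degree_C_mul_X_pow_le _ _) ?_
    exact_mod_cast hk
  have hmonic : g.Monic := Polynomial.monic_X_pow_add hdegs
  have hgdeg : g.degree = (N : WithBot ℕ) := by
    rw [hg, Polynomial.degree_add_eq_left_of_degree_lt, Polynomial.degree_X_pow]
    rw [Polynomial.degree_X_pow]
    exact hdegs
  have hdeg : g.natDegree = N := Polynomial.natDegree_eq_of_degree_eq_some hgdeg
  have hcoeff : ∀ k, k < N → g.coeff k = (-1:ℂ)^(N-k) * e (N-k) := by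
    intro k hk
    rw [hg, Polynomial.coeff_add, Polynomial.coeff_X_pow, Polynomial.finset_sum_coeff]
    have : ∀ j ∈ Finset.range N,
        (Polynomial.C ((-1:ℂ)^(N-j) * e (N-j)) * Polynomial.X^j).coeff k
        = if j = k then (-1:ℂ)^(N-j) * e (N-j) else 0 := by
      intro j hj
      rw [Polynomial.coeff_C_mul, Polynomial.coeff_X_pow]
      by_cases h : k = j <;> simp [h, eq_comm]
    rw [Finset.sum_congr rfl this, Finset.sum_ite_eq' (Finset.range N) k]
    simp [Finset.mem_range.mpr hk, Nat.ne_of_lt hk]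
  -- roots
  have hsplits : g.Splits := IsAlgClosed.splits g
  have hcard : g.roots.card = N := by
    rw [Polynomial.splits_iff_card_roots.mp hsplits, hdeg]
  set L : List ℂ := g.roots.toList with hLdef
  have hL : L.length = N := by rw [hLdef, Multiset.length_toList, hcard]
  set r : Fin N → ℂ := fun i => L.get (Fin.cast hL.symm i) with hr
  have hofFn : List.ofFn r = L := by
    refine List.ext_get (by simp [hL, hN]) fun i h1 h2 => ?_
    rw [List.get_ofFn]
    rfl
  have hmap : Multiset.map r Finset.univ.val = g.roots := by
    rw [Fin.univ_val_map, hofFn, hLdef, Multiset.coe_toList]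
  -- evaluations of symmetric functions at the roots
  set ε : ℕ → ℂ := fun m => MvPolynomial.eval r (MvPolynomial.esymm (Fin N) ℂ m) with hε
  set p' : ℕ → ℂ := fun m => MvPolynomial.eval r (MvPolynomial.psum (Fin N) ℂ m) with hp'
  have hε0 : ε 0 = 1 := by simp [hε, MvPolynomial.esymm_zero]
  have hεe : ∀ m, m ≤ N → ε m = e m := by
    intro m hm
    rcases Nat.eq_zero_or_pos m with h0 | h0
    · rw [h0, hε0, he0]
    have heval : ε m = (g.roots).esymm m := by
      have h1 := MvPolynomial.aeval_esymm_eq_multiset_esymm (Fin N) ℂ m r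
      rw [hmap] at h1
      rw [hε]
      rw [← h1]
      rw [MvPolynomial.aeval_def, Algebra.algebraMap_self, MvPolynomial.eval₂_id]
    have h2 := Polynomial.coeff_eq_esymm_roots_of_splits hsplits
      (k := N - m) (by rw [hdeg]; omega)
    rw [hmonic.leadingCoeff, one_mul, hdeg] at h2
    have hNm : N - (N - m) = m := by omega
    rw [hNm] at h2
    rw [hcoeff (N - m) (by omega), hNm] at h2
    have hne : ((-1 : ℂ))^m ≠ 0 := by simp
    rw [heval]
    exact mul_left_cancel₀ hne h2.symm
  have hrec' : ∀ m, 1 ≤ m → m ≤ N → (m : ℂ) * ε m = (-1)^(m+1) *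
      ∑ a ∈ (Finset.HasAntidiagonal.antidiagonal m).filter (fun a => a.1 < m),
        (-1)^a.1 * ε a.1 * p' a.2 := by
    intro m hm1 hmN
    have h1 := congrArg (MvPolynomial.eval r) (MvPolynomial.mul_esymm_eq_sum (Fin N) ℂ m)
    simpa only [map_mul, map_sum, map_pow, map_neg, map_one, map_natCast] using h1
  have hpp' : ∀ m, 1 ≤ m → m ≤ N → p m = p' m :=
    newton_eval N e p ε p' he0 hε0 hrec hrec' (fun m hm => (hεe m hm).symm)
  have hp'sum : ∀ m, p' m = ∑ i : Fin N, r i ^ m := by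
    intro m
    simp [hp', MvPolynomial.psum, map_sum]
  -- assemble
  refine ⟨r, ?_, g, hmonic, hdeg, ?_, ?_⟩
  · -- divisibility by X^(n+2)
    show (PowerSeries.X : PowerSeries ℂ)^(n+2) ∣
      P - ∑ i : Fin N, PowerSeries.rescale (r i) (PowerSeries.exp ℂ)
    rw [PowerSeries.X_pow_dvd_iff]
    intro m hm
    rw [map_sub, map_sum]
    have hcoe : ∀ i : Fin N,
        PowerSeries.coeff m (PowerSeries.rescale (r i) (PowerSeries.exp ℂ))
        = r i ^ m * (m.factorial : ℂ)⁻¹ := by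
      intro i
      rw [PowerSeries.coeff_rescale, PowerSeries.coeff_exp]
      congr 1
      rw [map_div₀, map_one, map_natCast, one_div]
    rw [Finset.sum_congr rfl (fun i _ => hcoe i)]
    rcases Nat.eq_zero_or_pos m with h0 | h0
    · subst h0
      simp only [pow_zero, one_mul, Nat.factorial_zero, Nat.cast_one, inv_one]
      rw [Finset.sum_const, Finset.card_univ, Fintype.card_fin]
      rw [PowerSeries.coeff_zero_eq_constantCoeff, hP]
      push_cast
      ring
    · have hmN : m ≤ N := by omega
      have hps := hpp' m h0 hmN
      rw [hp'sum] at hps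
      have hfac : ((m.factorial : ℂ)) ≠ 0 := Nat.cast_ne_zero.mpr m.factorial_ne_zero
      rw [← Finset.sum_mul, ← hps, hp]
      field_simp
      ring
  · -- coefficient formula
    intro k
    show g.coeff ↑k = MvPolynomial.eval
      (fun j : Fin N => (((j : ℕ) + 1).factorial : ℂ) * PowerSeries.coeff ((j : ℕ) + 1) P)
      (MvPolynomial.C ((-1:ℂ)^(N-(k:ℕ))) * MvPolynomial.rename f' (EE (N-(k:ℕ))))
    rw [map_mul, MvPolynomial.eval_C, MvPolynomial.eval_rename]
    have hFG : ((fun j : Fin N =>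
        (((j : ℕ) + 1).factorial : ℂ) * PowerSeries.coeff ((j : ℕ) + 1) P) ∘ f') = G := rfl
    rw [hFG]
    exact hcoeff (k : ℕ) (by omega)
  · -- roots
    intro i
    have hmem : r i ∈ g.roots := by
      rw [← hmap]
      exact Multiset.mem_map_of_mem r (Finset.mem_val.mpr (Finset.mem_univ i))
    exact Polynomial.isRoot_of_mem_roots hmem
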